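/- Consider the Bregman projection with respect to A* (the conjugate Gaussian log-partition in expectation parameters ω = (μ, Σ + μμ^⊤)) onto C = {(μ, Σ + μμ^⊤) : αI ⪯ Σ ⪯ βI} for 0 < α < β. For ω = (μ, Σ + μμ^⊤) with Σ positive definite, proj_C^{A*}(ω) = (μ, Σ_P + μμ^⊤) where Σ_P is obtained from Σ by replacing every eigenvalue larger than β by β and every eigenvalue smaller than α by α (keeping the same eigenvectors). -/

import Mathlib

open Matrix

section helpers
variable {n : Type*} [Fintype n] [DecidableEq n]

lemma aux_trace_eig {P : Matrix n n ℝ} (hP : P.PosDef) :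
    P.trace = ∑ i, hP.1.eigenvalues i := by
  conv_lhs => rw [hP.1.spectral_theorem]
  rw [Unitary.conjStarAlgAut_apply, trace_mul_cycle, Unitary.coe_star_mul_self, one_mul]
  simp [Matrix.trace_diagonal]

lemma aux_logdet {P : Matrix n n ℝ} (hP : P.PosDef) :
    Real.log P.det ≤ P.trace - Fintype.card n ∧
      (Real.log P.det = P.trace - Fintype.card n → P = 1) := by
  have he : ∀ i, 0 < hP.1.eigenvalues i := fun i => hP.eigenvalues_pos i
  have hdet : P.det = ∏ i, hP.1.eigenvalues i := by simpa using hP.1.det_eq_prod_eigenvalues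
  have hlog : Real.log P.det = ∑ i, Real.log (hP.1.eigenvalues i) := by
    rw [hdet, Real.log_prod (fun i _ => (he i).ne')]
  have htr : P.trace = ∑ i, hP.1.eigenvalues i := aux_trace_eig hP
  have hterm : ∀ i, Real.log (hP.1.eigenvalues i) ≤ hP.1.eigenvalues i - 1 :=
    fun i => Real.log_le_sub_one_of_pos (he i)
  constructor
  · rw [hlog, htr]
    calc ∑ i, Real.log (hP.1.eigenvalues i) ≤ ∑ i, (hP.1.eigenvalues i - 1) :=
          Finset.sum_le_sum fun i _ => hterm i
      _ = (∑ i, hP.1.eigenvalues i) - Fintype.card n := by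
          rw [Finset.sum_sub_distrib]; simp [Finset.card_univ]
  · intro heq
    have hsum0 : ∑ i, (hP.1.eigenvalues i - 1 - Real.log (hP.1.eigenvalues i)) = 0 := by
      rw [hlog, htr] at heq
      rw [Finset.sum_sub_distrib, Finset.sum_sub_distrib]
      simp only [Finset.sum_const, Finset.card_univ, nsmul_eq_mul, mul_one]
      linarith
    have h1 : ∀ i, hP.1.eigenvalues i = 1 := by
      intro i
      have := (Finset.sum_eq_zero_iff_of_nonneg
        (fun i _ => by linarith [hterm i])).mp hsum0 i (Finset.mem_univ i)
      by_contra hne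
      have := Real.log_lt_sub_one_of_pos (he i) hne
      linarith
    conv_lhs => rw [hP.1.spectral_theorem]
    have : (RCLike.ofReal ∘ hP.1.eigenvalues : n → ℝ) = fun _ => 1 := by
      funext i; simp [h1 i]
    rw [this, diagonal_one, Unitary.conjStarAlgAut_apply, mul_one]
    exact mem_unitaryGroup_iff.mp (hP.1.eigenvectorUnitary).2

lemma aux_posDef_conj {A B L : Matrix n n ℝ} (hA : A.PosDef) (hL : L * B = 1) :
    (Bᵀ * A * B).PosDef := by
  have hAt : Aᵀ = A := by
    rw [← conjTranspose_eq_transpose_of_trivial]; exact hA.1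
  refine Matrix.PosDef.of_dotProduct_mulVec_pos ?_ ?_
  · show (Bᵀ * A * B)ᴴ = _
    rw [conjTranspose_eq_transpose_of_trivial, transpose_mul, transpose_mul,
      transpose_transpose, hAt, mul_assoc]
  · intro x hx
    have hBx : B *ᵥ x ≠ 0 := by
      intro h
      apply hx
      have : L *ᵥ (B *ᵥ x) = x := by rw [mulVec_mulVec, hL, one_mulVec]
      rw [h, mulVec_zero] at this
      exact this.symm
    have := hA.dotProduct_mulVec_pos hBx
    rw [star_trivial] at this ⊢
    calc (0:ℝ) < (B *ᵥ x) ⬝ᵥ (A *ᵥ (B *ᵥ x)) := this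
      _ = x ⬝ᵥ ((Bᵀ * A * B) *ᵥ x) := by
          rw [← mulVec_mulVec, ← mulVec_mulVec, dotProduct_mulVec x, vecMul_transpose]

lemma aux_diag_nonneg {M : Matrix n n ℝ} (hM : M.PosSemidef) (i : n) : 0 ≤ M i i := by
  have := hM.dotProduct_mulVec_nonneg (Pi.single i 1)
  simpa [mulVec_single, dotProduct, Pi.single_apply] using this

lemma aux_trace_diag_mul (v : n → ℝ) (M : Matrix n n ℝ) :
    (Matrix.diagonal v * M).trace = ∑ i, v i * M i i := by
  simp [Matrix.trace, Matrix.diag, Matrix.mul_apply, Matrix.diagonal_apply, Finset.sum_ite_eq]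

end helpers

set_option maxHeartbeats 1000000 in
/-- Bregman projection (w.r.t. the conjugate Gaussian log-partition `A*`) of a
Gaussian parameter `ω = (μ, Σ + μμᵀ)` onto `C = {(μ', Σ' + μ'μ'ᵀ) : αI ⪯ Σ' ⪯ βI}`:
in `(μ', Σ')` coordinates the projection minimizes
`F(μ',Σ') = -½ log det Σ' + ½ tr(Σ⁻¹Σ') + ½ (μ-μ')ᵀΣ⁻¹(μ-μ')`, and its unique
minimizer is `(μ, Σ_P)`, where `Σ_P` clips the eigenvalues of `Σ` to `[α, β]`
keeping the same eigenvectors. -/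
theorem stmt_16 {d : ℕ} (α β : ℝ) (hα : 0 < α) (hαβ : α < β)
    (μ : Fin d → ℝ) (Sg Q : Matrix (Fin d) (Fin d) ℝ) (lam : Fin d → ℝ)
    (hQ : Qᵀ * Q = 1) (hQ' : Q * Qᵀ = 1) (hlam : ∀ i, 0 < lam i)
    (hSg : Sg = Qᵀ * Matrix.diagonal lam * Q)
    (F : (Fin d → ℝ) × Matrix (Fin d) (Fin d) ℝ → ℝ)
    (hF : ∀ p, F p = -(1/2 : ℝ) * Real.log p.2.det + (1/2 : ℝ) * (Sg⁻¹ * p.2).trace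
        + (1/2 : ℝ) * ((μ - p.1) ⬝ᵥ (Sg⁻¹ *ᵥ (μ - p.1))))
    (C : Set ((Fin d → ℝ) × Matrix (Fin d) (Fin d) ℝ))
    (hC : C = {p | p.2.IsSymm ∧ (p.2 - α • (1 : Matrix (Fin d) (Fin d) ℝ)).PosSemidef ∧
        ((β • (1 : Matrix (Fin d) (Fin d) ℝ)) - p.2).PosSemidef})
    (SgP : Matrix (Fin d) (Fin d) ℝ)
    (hSgP : SgP = Qᵀ * Matrix.diagonal (fun i => min β (max α (lam i))) * Q) :
    (μ, SgP) ∈ C ∧ (∀ p ∈ C, F (μ, SgP) ≤ F p) ∧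
      ∀ p ∈ C, F p = F (μ, SgP) → p = (μ, SgP) := by
  subst hC
  set c : Fin d → ℝ := fun i => min β (max α (lam i)) with hc
  have hcα : ∀ i, α ≤ c i := fun i => le_min hαβ.le (le_max_left _ _)
  have hcβ : ∀ i, c i ≤ β := fun i => min_le_left _ _
  have hcpos : ∀ i, 0 < c i := fun i => lt_of_lt_of_le hα (hcα i)
  have hdetQ : Q.det * Q.det = 1 := by
    have := congrArg Matrix.det hQ
    rwa [det_mul, det_transpose, det_one] at this
  -- conjugation helpers
  have hconj : ∀ M : Matrix (Fin d) (Fin d) ℝ, Qᵀ * (Q * M * Qᵀ) * Q = M := by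
    intro M
    simp only [← Matrix.mul_assoc]
    rw [hQ, one_mul, Matrix.mul_assoc, hQ, mul_one]
  have hconj' : ∀ M : Matrix (Fin d) (Fin d) ℝ, Q * (Qᵀ * M * Q) * Qᵀ = M := by
    intro M
    simp only [← Matrix.mul_assoc]
    rw [hQ', one_mul, Matrix.mul_assoc, hQ', mul_one]
  have hsmul1 : ∀ r : ℝ, Qᵀ * (r • (1 : Matrix (Fin d) (Fin d) ℝ)) * Q
      = r • (1 : Matrix (Fin d) (Fin d) ℝ) := by
    intro r
    rw [mul_smul_comm, mul_one, smul_mul_assoc, hQ]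
  have hSgInv : Sg⁻¹ = Qᵀ * Matrix.diagonal (fun i => (lam i)⁻¹) * Q := by
    apply inv_eq_right_inv
    rw [hSg]
    calc Qᵀ * Matrix.diagonal lam * Q * (Qᵀ * Matrix.diagonal (fun i => (lam i)⁻¹) * Q)
        = Qᵀ * (Matrix.diagonal lam * (Q * Qᵀ) * Matrix.diagonal (fun i => (lam i)⁻¹)) * Q := by
          simp only [Matrix.mul_assoc]
      _ = 1 := by
          rw [hQ', mul_one, diagonal_mul_diagonal]
          have : (fun i => lam i * (lam i)⁻¹) = fun _ : Fin d => (1:ℝ) := by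
            funext i; exact mul_inv_cancel₀ (hlam i).ne'
          rw [this, diagonal_one, mul_one, hQ]
  have hSgPD : Sg.PosDef := by
    rw [hSg]
    exact aux_posDef_conj (posDef_diagonal_iff.mpr fun i => hlam i) hQ
  have hSgInvPD : Sg⁻¹.PosDef := hSgPD.inv
  -- trace formula
  have htrQ : ∀ (v : Fin d → ℝ) (M : Matrix (Fin d) (Fin d) ℝ),
      ((Qᵀ * Matrix.diagonal v * Q) * M).trace = ∑ i, v i * (Q * M * Qᵀ) i i := by
    intro v M
    have h1 : (Qᵀ * Matrix.diagonal v * Q) * M = Qᵀ * (Matrix.diagonal v * (Q * M)) := by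
      simp only [Matrix.mul_assoc]
    rw [h1, trace_mul_comm, Matrix.mul_assoc, Matrix.mul_assoc, ← Matrix.mul_assoc Q M Qᵀ,
      aux_trace_diag_mul]
  -- membership of (μ, SgP)
  have hsplitsub : ∀ v w : Fin d → ℝ,
      Qᵀ * Matrix.diagonal v * Q - Qᵀ * Matrix.diagonal w * Q
        = Qᵀ * Matrix.diagonal (fun i => v i - w i) * Q := by
    intro v w
    have : Matrix.diagonal (fun i => v i - w i) = Matrix.diagonal v - Matrix.diagonal w := by
      rw [← diagonal_sub]
    rw [this, Matrix.mul_sub, Matrix.sub_mul]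
  have hdiagconst : ∀ r : ℝ, (r • (1 : Matrix (Fin d) (Fin d) ℝ))
      = Qᵀ * Matrix.diagonal (fun _ => r) * Q := by
    intro r
    have h0 : Matrix.diagonal (fun _ : Fin d => r) = r • (1 : Matrix (Fin d) (Fin d) ℝ) := by
      ext i j
      by_cases h : i = j <;> simp [Matrix.diagonal_apply, Matrix.one_apply, h]
    rw [h0]
    exact (hsmul1 r).symm
  have hPSDconj : ∀ v : Fin d → ℝ, (∀ i, 0 ≤ v i) →
      (Qᵀ * Matrix.diagonal v * Q).PosSemidef := by
    intro v hv
    have := (posSemidef_diagonal_iff.mpr fun i => hv i).conjTranspose_mul_mul_same Q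
    rwa [conjTranspose_eq_transpose_of_trivial] at this
  have hmem : (μ, SgP) ∈ {p : (Fin d → ℝ) × Matrix (Fin d) (Fin d) ℝ |
      p.2.IsSymm ∧ (p.2 - α • (1 : Matrix (Fin d) (Fin d) ℝ)).PosSemidef ∧
        ((β • (1 : Matrix (Fin d) (Fin d) ℝ)) - p.2).PosSemidef} := by
    refine ⟨?_, ?_, ?_⟩
    · show SgPᵀ = SgP
      rw [hSgP]
      simp only [transpose_mul, transpose_transpose, diagonal_transpose, Matrix.mul_assoc]
    · have : SgP - α • (1 : Matrix (Fin d) (Fin d) ℝ)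
          = Qᵀ * Matrix.diagonal (fun i => c i - α) * Q := by
        rw [hSgP, hdiagconst, hsplitsub]
      rw [this]
      exact hPSDconj _ fun i => sub_nonneg.mpr (hcα i)
    · have : (β • (1 : Matrix (Fin d) (Fin d) ℝ)) - SgP
          = Qᵀ * Matrix.diagonal (fun i => β - c i) * Q := by
        rw [hSgP, hdiagconst, hsplitsub]
      rw [this]
      exact hPSDconj _ fun i => sub_nonneg.mpr (hcβ i)
  -- value at the projection point
  have hQSgPQ : Q * SgP * Qᵀ = Matrix.diagonal c := by rw [hSgP, hconj']
  have hdetSgP : SgP.det = ∏ i, c i := by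
    rw [hSgP, det_mul, det_mul, det_transpose, det_diagonal]
    linear_combination (∏ i, c i) * hdetQ
  have hA2 : (Sg⁻¹ * SgP).trace = ∑ i, (lam i)⁻¹ * c i := by
    rw [hSgInv, htrQ, hQSgPQ]
    exact Finset.sum_congr rfl fun i _ => by rw [diagonal_apply_eq]
  have hFq : F (μ, SgP) = -(1/2 : ℝ) * Real.log (∏ i, c i)
      + (1/2 : ℝ) * ∑ i, (lam i)⁻¹ * c i := by
    rw [hF, hdetSgP, hA2]
    simp
  -- main estimate for arbitrary p ∈ C
  have hmain : ∀ p ∈ {p : (Fin d → ℝ) × Matrix (Fin d) (Fin d) ℝ |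
      p.2.IsSymm ∧ (p.2 - α • (1 : Matrix (Fin d) (Fin d) ℝ)).PosSemidef ∧
        ((β • (1 : Matrix (Fin d) (Fin d) ℝ)) - p.2).PosSemidef},
      F (μ, SgP) ≤ F p ∧ (F p = F (μ, SgP) → p = (μ, SgP)) := by
    rintro ⟨μ', S⟩ ⟨hsymm, hαS, hβS⟩
    set N : Matrix (Fin d) (Fin d) ℝ := Q * S * Qᵀ with hN
    have hSrec : S = Qᵀ * N * Q := (hconj S).symm
    have hSPD : S.PosDef := by
      have h1 : (α • (1 : Matrix (Fin d) (Fin d) ℝ)).PosDef := by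
        rw [hdiagconst]
        exact aux_posDef_conj (posDef_diagonal_iff.mpr fun _ => hα) hQ
      have := h1.add_posSemidef hαS
      rwa [add_sub_cancel] at this
    have hNPD : N.PosDef := by
      have := aux_posDef_conj hSPD hQ'
      rwa [transpose_transpose] at this
    have hβN : ((β • (1 : Matrix (Fin d) (Fin d) ℝ)) - N).PosSemidef := by
      have h2 := hβS.mul_mul_conjTranspose_same Q
      rw [conjTranspose_eq_transpose_of_trivial] at h2
      have h3 : Q * ((β • (1 : Matrix (Fin d) (Fin d) ℝ)) - S) * Qᵀ
          = (β • (1 : Matrix (Fin d) (Fin d) ℝ)) - N := by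
        rw [Matrix.mul_sub, Matrix.sub_mul]
        congr 1
        rw [mul_smul_comm, mul_one, smul_mul_assoc, hQ']
      rwa [h3] at h2
    have hαN : (N - α • (1 : Matrix (Fin d) (Fin d) ℝ)).PosSemidef := by
      have h2 := hαS.mul_mul_conjTranspose_same Q
      rw [conjTranspose_eq_transpose_of_trivial] at h2
      have h3 : Q * (S - α • (1 : Matrix (Fin d) (Fin d) ℝ)) * Qᵀ
          = N - α • (1 : Matrix (Fin d) (Fin d) ℝ) := by
        rw [Matrix.mul_sub, Matrix.sub_mul]
        congr 1
        rw [mul_smul_comm, mul_one, smul_mul_assoc, hQ']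
      rwa [h3] at h2
    have hmβ : ∀ i, N i i ≤ β := by
      intro i
      have := aux_diag_nonneg hβN i
      simp only [Matrix.sub_apply, Matrix.smul_apply, Matrix.one_apply_eq, smul_eq_mul,
        mul_one] at this
      linarith
    have hmα : ∀ i, α ≤ N i i := by
      intro i
      have := aux_diag_nonneg hαN i
      simp only [Matrix.sub_apply, Matrix.smul_apply, Matrix.one_apply_eq, smul_eq_mul,
        mul_one] at this
      linarith
    -- determinant relation
    have hdetS : S.det = N.det := by
      rw [hN, det_mul, det_mul, det_transpose]
      linear_combination (-S.det) * hdetQ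
    -- trace relation
    have hA1 : (Sg⁻¹ * S).trace = ∑ i, (lam i)⁻¹ * N i i := by
      rw [hSgInv, htrQ]
    -- the log-det inequality via P = E * N * E
    set E : Matrix (Fin d) (Fin d) ℝ := Matrix.diagonal (fun i => (Real.sqrt (c i))⁻¹) with hE
    set L : Matrix (Fin d) (Fin d) ℝ := Matrix.diagonal (fun i => Real.sqrt (c i)) with hL
    have hsqrtpos : ∀ i, 0 < Real.sqrt (c i) := fun i => Real.sqrt_pos.mpr (hcpos i)
    have hLE : L * E = 1 := by
      rw [hL, hE, diagonal_mul_diagonal]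
      have : (fun i => Real.sqrt (c i) * (Real.sqrt (c i))⁻¹) = fun _ : Fin d => (1:ℝ) := by
        funext i; exact mul_inv_cancel₀ (hsqrtpos i).ne'
      rw [this, diagonal_one]
    have hEL : E * L = 1 := by
      rw [hL, hE, diagonal_mul_diagonal]
      have : (fun i => (Real.sqrt (c i))⁻¹ * Real.sqrt (c i)) = fun _ : Fin d => (1:ℝ) := by
        funext i; exact inv_mul_cancel₀ (hsqrtpos i).ne'
      rw [this, diagonal_one]
    have hEE : E * E = Matrix.diagonal (fun i => (c i)⁻¹) := by
      rw [hE, diagonal_mul_diagonal]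
      exact congrArg Matrix.diagonal (funext fun i => by
        rw [← mul_inv, Real.mul_self_sqrt (hcpos i).le])
    have hLL : L * L = Matrix.diagonal c := by
      rw [hL, diagonal_mul_diagonal]
      exact congrArg Matrix.diagonal (funext fun i => Real.mul_self_sqrt (hcpos i).le)
    have hPPD : (E * N * E).PosDef := by
      have := aux_posDef_conj hNPD hLE
      rwa [hE, diagonal_transpose] at this
    have htraceP : (E * N * E).trace = ∑ i, (c i)⁻¹ * N i i := by
      rw [trace_mul_comm, ← Matrix.mul_assoc, hEE, aux_trace_diag_mul]
    have hdetN : 0 < N.det := hNPD.det_pos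
    have hprodc : 0 < ∏ i, c i := Finset.prod_pos fun i _ => hcpos i
    have hdetP : (E * N * E).det = N.det * (∏ i, c i)⁻¹ := by
      rw [det_mul, det_mul, hE, det_diagonal]
      rw [← Finset.prod_inv_distrib]
      have h4 : ∀ i : Fin d, (Real.sqrt (c i))⁻¹ = (Real.sqrt (c i))⁻¹ := fun _ => rfl
      have : (∏ i, (Real.sqrt (c i))⁻¹) * N.det * ∏ i, (Real.sqrt (c i))⁻¹
          = N.det * ((∏ i, (Real.sqrt (c i))⁻¹) * (∏ i, (Real.sqrt (c i))⁻¹)) := by ring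
      rw [this, ← Finset.prod_mul_distrib]
      congr 1
      refine Finset.prod_congr rfl fun i _ => ?_
      rw [← mul_inv, Real.mul_self_sqrt (hcpos i).le]
    have hlogdetP : Real.log (E * N * E).det = Real.log N.det - Real.log (∏ i, c i) := by
      rw [hdetP, Real.log_mul hdetN.ne' (by positivity), Real.log_inv]
      ring
    have hlogdet := aux_logdet hPPD
    rw [hlogdetP, htraceP, Fintype.card_fin] at hlogdet
    -- T2 ≥ 0
    have hT2 : 0 ≤ ∑ i, ((lam i)⁻¹ - (c i)⁻¹) * (N i i - c i) := by
      refine Finset.sum_nonneg fun i _ => ?_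
      rcases lt_or_ge β (lam i) with h | h
      · have hci : c i = β := by
          rw [hc]
          simp only
          rw [max_eq_right (le_of_lt (lt_trans hαβ h)), min_eq_left h.le]
        have h1 : (lam i)⁻¹ ≤ β⁻¹ := by
          apply inv_anti₀ (lt_trans hα hαβ) h.le
        have h2 : N i i ≤ β := hmβ i
        rw [hci]
        nlinarith
      · rcases lt_or_ge (lam i) α with h' | h'
        · have hci : c i = α := by
            rw [hc]
            simp only
            rw [max_eq_left h'.le, min_eq_right hαβ.le]
          have h1 : α⁻¹ ≤ (lam i)⁻¹ := inv_anti₀ (hlam i) h'.le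
          have h2 : α ≤ N i i := hmα i
          rw [hci]
          nlinarith
        · have hci : c i = lam i := by
            rw [hc]
            simp only
            rw [max_eq_right h', min_eq_right h]
          rw [hci]
          simp
    -- quadratic term
    have hquad0 : 0 ≤ (μ - μ') ⬝ᵥ (Sg⁻¹ *ᵥ (μ - μ')) := by
      have := hSgInvPD.posSemidef.dotProduct_mulVec_nonneg (μ - μ')
      rwa [star_trivial] at this
    -- the sum identity
    have hkey : ∑ i, (lam i)⁻¹ * N i i + (d:ℝ)
        = ∑ i, (lam i)⁻¹ * c i + ∑ i, (c i)⁻¹ * N i i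
          + ∑ i, ((lam i)⁻¹ - (c i)⁻¹) * (N i i - c i) := by
      have hper : ∀ i : Fin d, (lam i)⁻¹ * N i i + 1
          = (lam i)⁻¹ * c i + (c i)⁻¹ * N i i + ((lam i)⁻¹ - (c i)⁻¹) * (N i i - c i) := by
        intro i
        have h1 : (c i)⁻¹ * c i = 1 := inv_mul_cancel₀ (hcpos i).ne'
        linear_combination -h1
      calc ∑ i, (lam i)⁻¹ * N i i + (d:ℝ)
          = ∑ i : Fin d, ((lam i)⁻¹ * N i i + 1) := by
            rw [Finset.sum_add_distrib]
            simp [Finset.card_univ]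
        _ = ∑ i : Fin d, ((lam i)⁻¹ * c i + (c i)⁻¹ * N i i
              + ((lam i)⁻¹ - (c i)⁻¹) * (N i i - c i)) :=
            Finset.sum_congr rfl fun i _ => hper i
        _ = _ := by rw [Finset.sum_add_distrib, Finset.sum_add_distrib]
    -- put everything together
    have hFp : F (μ', S) = -(1/2 : ℝ) * Real.log N.det
        + (1/2 : ℝ) * ∑ i, (lam i)⁻¹ * N i i
        + (1/2 : ℝ) * ((μ - μ') ⬝ᵥ (Sg⁻¹ *ᵥ (μ - μ'))) := by
      rw [hF (μ', S)]
      simp only [hdetS, hA1]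
    constructor
    · rw [hFp, hFq]
      have := hlogdet.1
      linarith
    · intro heqF
      rw [hFp, hFq] at heqF
      have h1 := hlogdet.1
      have heq1 : Real.log N.det - Real.log (∏ i, c i) = (∑ i, (c i)⁻¹ * N i i) - d := by
        linarith
      have heq2 : (μ - μ') ⬝ᵥ (Sg⁻¹ *ᵥ (μ - μ')) = 0 := by linarith
      have hμ : μ' = μ := by
        by_contra hne
        have hz : μ - μ' ≠ 0 := by
          intro h
          apply hne
          have := sub_eq_zero.mp h
          exact this.symm
        have := hSgInvPD.dotProduct_mulVec_pos hz
        rw [star_trivial] at this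
        linarith
      have hP1 : E * N * E = 1 := hlogdet.2 heq1
      have hND : N = Matrix.diagonal c := by
        have : L * (E * N * E) * L = N := by
          simp only [← Matrix.mul_assoc]
          rw [hLE, one_mul, Matrix.mul_assoc, hEL, mul_one]
        rw [hP1, mul_one, hLL] at this
        exact this.symm
      have hS : S = SgP := by rw [hSrec, hND, hSgP]
      rw [Prod.ext_iff]
      exact ⟨hμ, hS⟩
  exact ⟨hmem, fun p hp => (hmain p hp).1, fun p hp => (hmain p hp).2⟩
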